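/- arXiv:2403.14052 — 4 statements merged into one kernel-verified Lean document; each statement's English description precedes it below -/
import Mathlib

section
/- Let p > 1 and q ≥ 0, and let W : [0,1] → ℝ be a C¹ function with W continuous, W > 0 on (0,1), W symmetric about 1/2 (W(x) = W(1-x) for all x ∈ [0,1]), W(0)=W(1)=0, W strictly increasing on [0,1/2], W(1/2) = ξ > 0, and W'(x) = sqrt((2/(p+1))·(ξ^{p+1} - W(x)^{p+1})) on [0,1/2]. Then ∫₀¹ W(x)^q dx = 2·sqrt((p+1)/2)·ξ^{(2q-p+1)/2}·∫₀¹ s^q / sqrt(1 - s^{p+1}) ds. -/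
open Set MeasureTheory intervalIntegral

theorem stmt2 (p q : ℝ) (hp : 1 < p) (hq : 0 ≤ q) (W : ℝ → ℝ) (ξ : ℝ) (hξ : 0 < ξ)
    (hW : ContDiffOn ℝ 1 W (Set.Icc 0 1))
    (hpos : ∀ x ∈ Set.Ioo (0:ℝ) 1, 0 < W x)
    (hsym : ∀ x ∈ Set.Icc (0:ℝ) 1, W x = W (1 - x))
    (h0 : W 0 = 0) (h1 : W 1 = 0)
    (hmono : StrictMonoOn W (Set.Icc 0 (1/2)))
    (hmax : W (1/2) = ξ)
    (hd : ∀ x ∈ Set.Icc (0:ℝ) (1/2),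
      deriv W x = Real.sqrt ((2/(p+1)) * (ξ ^ (p+1) - W x ^ (p+1)))) :
    ∫ x in (0:ℝ)..1, W x ^ q
      = 2 * Real.sqrt ((p+1)/2) * ξ ^ ((2*q - p + 1)/2)
        * ∫ s in (0:ℝ)..1, s ^ q / Real.sqrt (1 - s ^ (p+1)) := by
  have hp1 : (0:ℝ) < p + 1 := by linarith
  have hcont : ContinuousOn W (Set.Icc 0 1) := hW.continuousOn
  have hcq : ContinuousOn (fun x => W x ^ q) (Set.Icc 0 1) :=
    hcont.rpow_const (fun x _ => Or.inr hq)
  have hsub : Set.Icc (0:ℝ) (1/2) ⊆ Set.Icc 0 1 := Set.Icc_subset_Icc le_rfl (by norm_num)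
  set A := ∫ x in Set.Ioo (0:ℝ) (1/2), W x ^ q with hA
  set L := ∫ s in (0:ℝ)..1, s ^ q / Real.sqrt (1 - s ^ (p+1)) with hL
  -- Step 1: symmetry, LHS = 2 * A
  have hInt : IntervalIntegrable (fun x => W x ^ q) volume 0 1 :=
    ContinuousOn.intervalIntegrable (by rw [Set.uIcc_of_le (by norm_num : (0:ℝ) ≤ 1)]; exact hcq)
  have hI1 : IntervalIntegrable (fun x => W x ^ q) volume 0 (1/2) :=
    hInt.mono_set (by rw [Set.uIcc_of_le (by norm_num), Set.uIcc_of_le (by norm_num)]; exact hsub)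
  have hI2 : IntervalIntegrable (fun x => W x ^ q) volume (1/2) 1 :=
    hInt.mono_set (by
      rw [Set.uIcc_of_le (by norm_num : (1/2:ℝ) ≤ 1), Set.uIcc_of_le (by norm_num : (0:ℝ) ≤ 1)]
      exact Set.Icc_subset_Icc (by norm_num) le_rfl)
  have h12 : (∫ x in (1/2:ℝ)..1, W x ^ q) = ∫ x in (0:ℝ)..(1/2), W x ^ q := by
    have hc : (∫ x in (1/2:ℝ)..1, W x ^ q) = ∫ x in (1/2:ℝ)..1, W (1-x) ^ q := by
      apply intervalIntegral.integral_congr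
      intro x hx
      rw [Set.uIcc_of_le (by norm_num : (1/2:ℝ) ≤ 1)] at hx
      have : x ∈ Set.Icc (0:ℝ) 1 := ⟨by linarith [hx.1], hx.2⟩
      simp only [hsym x this]
    rw [hc, intervalIntegral.integral_comp_sub_left (fun u => W u ^ q) 1]
    norm_num
  have hsplit : (∫ x in (0:ℝ)..1, W x ^ q) = 2 * A := by
    rw [← intervalIntegral.integral_add_adjacent_intervals hI1 hI2, h12,
      intervalIntegral.integral_of_le (by norm_num : (0:ℝ) ≤ 1/2),
      MeasureTheory.integral_Ioc_eq_integral_Ioo]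
    ring
  -- Step 2: change of variables
  have hIm : W '' Set.Ioo 0 (1/2) = Set.Ioo 0 ξ := by
    apply Set.Subset.antisymm
    · rintro _ ⟨x, hx, rfl⟩
      have hxI : x ∈ Set.Icc (0:ℝ) (1/2) := ⟨hx.1.le, hx.2.le⟩
      constructor
      · rw [← h0]; exact hmono ⟨le_rfl, by norm_num⟩ hxI hx.1
      · rw [← hmax]; exact hmono hxI ⟨by norm_num, le_rfl⟩ hx.2
    · have := intermediate_value_Ioo (by norm_num : (0:ℝ) ≤ 1/2) (hcont.mono hsub)
      rwa [h0, hmax] at this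
  have hderiv : ∀ x ∈ Set.Ioo (0:ℝ) (1/2),
      HasDerivWithinAt W (deriv W x) (Set.Ioo 0 (1/2)) x := by
    intro x hx
    have hxI : Set.Icc (0:ℝ) 1 ∈ nhds x := Icc_mem_nhds hx.1 (by linarith [hx.2])
    have : DifferentiableAt ℝ W x :=
      ((hW.differentiableOn one_ne_zero) x ⟨hx.1.le, by linarith [hx.2]⟩).differentiableAt hxI
    exact this.hasDerivAt.hasDerivWithinAt
  have hinj : Set.InjOn W (Set.Ioo 0 (1/2)) := hmono.injOn.mono Set.Ioo_subset_Icc_self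
  have hCV := MeasureTheory.integral_image_eq_integral_abs_deriv_smul measurableSet_Ioo hderiv
    hinj (fun u => (u/ξ)^q / Real.sqrt (1 - (u/ξ)^(p+1)))
  rw [hIm] at hCV
  -- pointwise identity
  have hptw : ∀ x ∈ Set.Ioo (0:ℝ) (1/2),
      |deriv W x| • ((W x/ξ)^q / Real.sqrt (1 - (W x/ξ)^(p+1)))
        = (Real.sqrt (2/(p+1)) * ξ^((p+1)/2) / ξ^q) * W x ^ q := by
    intro x hx
    have hw0 : 0 < W x := hpos x ⟨hx.1, by linarith [hx.2]⟩
    have hwξ : W x < ξ := by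
      rw [← hmax]; exact hmono ⟨hx.1.le, hx.2.le⟩ ⟨by norm_num, le_rfl⟩ hx.2
    have hD : 0 < ξ^(p+1) - (W x)^(p+1) :=
      sub_pos.mpr (Real.rpow_lt_rpow hw0.le hwξ hp1)
    have hder := hd x ⟨hx.1.le, hx.2.le⟩
    have hsξ : Real.sqrt (ξ^(p+1)) = ξ^((p+1)/2) := by
      rw [Real.sqrt_eq_rpow, ← Real.rpow_mul hξ.le]
      ring_nf
    have hdiv : (W x/ξ)^(p+1) = (W x)^(p+1) / ξ^(p+1) := Real.div_rpow hw0.le hξ.le (p+1)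
    have h1s : 1 - (W x)^(p+1)/ξ^(p+1) = (ξ^(p+1) - (W x)^(p+1))/ξ^(p+1) := by
      field_simp
    rw [hder, smul_eq_mul, abs_of_nonneg (Real.sqrt_nonneg _),
      Real.sqrt_mul (by positivity : (0:ℝ) ≤ 2/(p+1)),
      Real.div_rpow hw0.le hξ.le, hdiv, h1s,
      Real.sqrt_div hD.le, hsξ]
    have hS : 0 < Real.sqrt (ξ^(p+1) - (W x)^(p+1)) := Real.sqrt_pos.mpr hD
    have hξq : (0:ℝ) < ξ^q := Real.rpow_pos_of_pos hξ q
    have hξp : (0:ℝ) < ξ^((p+1)/2) := Real.rpow_pos_of_pos hξ _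
    field_simp
  have hcongr : (∫ x in Set.Ioo (0:ℝ) (1/2),
      |deriv W x| • ((W x/ξ)^q / Real.sqrt (1 - (W x/ξ)^(p+1))))
      = (Real.sqrt (2/(p+1)) * ξ^((p+1)/2) / ξ^q) * A := by
    rw [← MeasureTheory.integral_const_mul]
    exact MeasureTheory.setIntegral_congr_fun measurableSet_Ioo hptw
  have hscale : (∫ u in Set.Ioo (0:ℝ) ξ, (u/ξ)^q / Real.sqrt (1 - (u/ξ)^(p+1))) = ξ * L := by
    rw [← MeasureTheory.integral_Ioc_eq_integral_Ioo,
      ← intervalIntegral.integral_of_le hξ.le]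
    have := intervalIntegral.integral_comp_div (a := (0:ℝ)) (b := ξ)
      (f := fun s => s ^ q / Real.sqrt (1 - s ^ (p+1))) hξ.ne'
    simpa [div_self hξ.ne'] using this
  have key : ξ * L = (Real.sqrt (2/(p+1)) * ξ^((p+1)/2) / ξ^q) * A := by
    rw [← hscale, hCV, hcongr]
  -- Step 3: algebra
  have hsq : Real.sqrt ((p+1)/2) * Real.sqrt (2/(p+1)) = 1 := by
    rw [← Real.sqrt_mul (by positivity),
      show ((p+1)/2) * (2/(p+1)) = 1 by field_simp]
    exact Real.sqrt_one
  have hxi : ξ^((2*q-p+1)/2) * ξ^((p+1)/2) = ξ^q * ξ := by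
    rw [← Real.rpow_add hξ, show (2*q-p+1)/2 + (p+1)/2 = q + 1 by ring,
      Real.rpow_add hξ, Real.rpow_one]
  have hξq : (0:ℝ) < ξ^q := Real.rpow_pos_of_pos hξ q
  rw [hsplit]
  have : 2 * Real.sqrt ((p+1)/2) * ξ ^ ((2*q - p + 1)/2) * (ξ * L)
      = (ξ^q * ξ) / ξ^q * (2 * A) := by
    rw [key]
    calc 2 * Real.sqrt ((p+1)/2) * ξ ^ ((2*q - p + 1)/2)
          * (Real.sqrt (2/(p+1)) * ξ^((p+1)/2) / ξ^q * A)
        = (Real.sqrt ((p+1)/2) * Real.sqrt (2/(p+1)))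
          * ((ξ^((2*q-p+1)/2) * ξ^((p+1)/2)) / ξ^q) * (2 * A) := by ring
      _ = (ξ^q * ξ) / ξ^q * (2 * A) := by rw [hsq, hxi]; ring
  have hxx : (ξ^q * ξ) / ξ^q = ξ := by field_simp
  rw [hxx] at this
  have := mul_left_cancel₀ hξ.ne' (by linarith [this] : ξ * (2 * A) = ξ * (2 * Real.sqrt ((p+1)/2) * ξ ^ ((2*q - p + 1)/2) * L))
  linarith [this]
end

section
/- Let p > 1, q > p, ξ > 0, and let W : [0,1] → ℝ be a C² function with -W'' = W^p on (0,1), W > 0 on (0,1), W(0) = 0, W'(1/2) = 0, W(1/2) = ξ, and (W')² = (2/(p+1))·(ξ^{p+1} − W^{p+1}) on [0,1/2]. Then ∫₀^{1/2} x·W(x)^q dx = (p+1)/(2q-p+1) · [ ξ^{q-p+1}/(q-p+1) + (2(q-p)/(p+1))·ξ^{p+1}·∫₀^{1/2} x·W(x)^{q-p-1} dx ]. -/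
open Set MeasureTheory intervalIntegral

theorem stmt12 (p q ξ : ℝ) (hp : 1 < p) (hq : p < q) (hξ : 0 < ξ) (W : ℝ → ℝ)
    (hW : ContDiffOn ℝ 2 W (Set.Icc 0 1))
    (hode : ∀ x ∈ Set.Ioo (0:ℝ) 1, -(deriv (deriv W) x) = W x ^ p)
    (hpos : ∀ x ∈ Set.Ioo (0:ℝ) 1, 0 < W x)
    (h0 : W 0 = 0) (hd : deriv W (1/2) = 0) (hxi : W (1/2) = ξ)
    (henergy : ∀ x ∈ Set.Icc (0:ℝ) (1/2),
      (deriv W x) ^ 2 = (2/(p+1)) * (ξ ^ (p+1) - W x ^ (p+1))) :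
    ∫ x in (0:ℝ)..(1/2), x * W x ^ q
      = (p+1)/(2*q - p + 1)
        * (ξ ^ (q - p + 1)/(q - p + 1)
          + (2*(q - p)/(p+1)) * ξ ^ (p+1) * ∫ x in (0:ℝ)..(1/2), x * W x ^ (q - p - 1)) := by
  have hsub : Set.Icc (0:ℝ) (1/2) ⊆ Set.Icc 0 1 := Set.Icc_subset_Icc le_rfl (by norm_num)
  have hsubo : Set.Ioo (0:ℝ) (1/2) ⊆ Set.Ioo 0 1 := Set.Ioo_subset_Ioo le_rfl (by norm_num)
  have hqp : 0 < q - p := by linarith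
  have hp1 : 0 < p + 1 := by linarith
  have hWc : ContinuousOn W (Set.Icc 0 1) := hW.continuousOn
  have hWIoo : ContDiffOn ℝ 2 W (Set.Ioo 0 1) := hW.mono Set.Ioo_subset_Icc_self
  have hW' : ContDiffOn ℝ 1 (deriv W) (Set.Ioo 0 1) := by
    have := hWIoo.deriv_of_isOpen (m := 1) isOpen_Ioo (by norm_num)
    simpa using this
  have hWd : ∀ x ∈ Set.Ioo (0:ℝ) 1, HasDerivAt W (deriv W x) x := by
    intro x hx
    have h1 : Set.Ioo (0:ℝ) 1 ∈ nhds x := isOpen_Ioo.mem_nhds hx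
    exact ((hWIoo.differentiableOn (by norm_num)).differentiableAt h1).hasDerivAt
  have hWd2 : ∀ x ∈ Set.Ioo (0:ℝ) 1, HasDerivAt (deriv W) (deriv (deriv W) x) x := by
    intro x hx
    have h1 : Set.Ioo (0:ℝ) 1 ∈ nhds x := isOpen_Ioo.mem_nhds hx
    exact ((hW'.differentiableOn (by norm_num)).differentiableAt h1).hasDerivAt
  -- concavity and linear lower bound
  have hconc : StrictConcaveOn ℝ (Set.Icc (0:ℝ) (1/2)) W := by
    apply strictConcaveOn_of_deriv2_neg (convex_Icc _ _) (hWc.mono hsub)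
    intro x hx
    rw [interior_Icc] at hx
    have hx1 : x ∈ Set.Ioo (0:ℝ) 1 := hsubo hx
    have h1 := hode x hx1
    have h2 : 0 < W x ^ p := Real.rpow_pos_of_pos (hpos x hx1) p
    have h3 : deriv^[2] W x = deriv (deriv W) x := rfl
    rw [h3]; linarith
  have hlin : ∀ x ∈ Set.Icc (0:ℝ) (1/2), 2*ξ*x ≤ W x := by
    intro x hx
    have hcc := hconc.concaveOn
    have h00 : (0:ℝ) ∈ Set.Icc (0:ℝ) (1/2) := by norm_num
    have h12 : (1/2:ℝ) ∈ Set.Icc (0:ℝ) (1/2) := by norm_num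
    have ha : (0:ℝ) ≤ 1 - 2*x := by have := hx.2; linarith
    have hb : (0:ℝ) ≤ 2*x := by have := hx.1; linarith
    have hab : (1 - 2*x) + 2*x = 1 := by ring
    have h := hcc.2 h00 h12 ha hb hab
    have heq : (1 - 2*x) • (0:ℝ) + (2*x) • (1/2:ℝ) = x := by
      simp [smul_eq_mul]; ring
    rw [heq] at h
    simp only [smul_eq_mul, h0, hxi, mul_zero, zero_add] at h
    linarith
  have hWnn : ∀ x ∈ Set.Icc (0:ℝ) (1/2), 0 ≤ W x := by
    intro x hx
    have := hlin x hx
    nlinarith [hx.1]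
  -- W ≤ ξ
  have hWle : ∀ x ∈ Set.Icc (0:ℝ) (1/2), W x ≤ ξ := by
    intro x hx
    by_contra hlt
    push_neg at hlt
    have h1 : ξ ^ (p+1) < W x ^ (p+1) := Real.rpow_lt_rpow hξ.le hlt (by linarith)
    have h2 := henergy x hx
    have h3 : (0:ℝ) < 2/(p+1) := by positivity
    nlinarith [sq_nonneg (deriv W x)]
  -- bound on deriv W
  set M := Real.sqrt ((2/(p+1)) * ξ ^ (p+1)) with hM_def
  have hM0 : 0 ≤ M := Real.sqrt_nonneg _
  have hM : ∀ x ∈ Set.Icc (0:ℝ) (1/2), |deriv W x| ≤ M := by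
    intro x hx
    have h2 := henergy x hx
    have h4 : 0 ≤ W x ^ (p+1) := Real.rpow_nonneg (hWnn x hx) _
    have h3 : (deriv W x)^2 ≤ (2/(p+1)) * ξ ^ (p+1) := by
      have h5 : (0:ℝ) < 2/(p+1) := by positivity
      nlinarith
    calc |deriv W x| = Real.sqrt ((deriv W x)^2) := (Real.sqrt_sq_eq_abs _).symm
      _ ≤ M := Real.sqrt_le_sqrt h3
  -- interval integrability helper
  have key_int : ∀ (f : ℝ → ℝ) (C : ℝ),
      AEStronglyMeasurable f (MeasureTheory.volume.restrict (Set.Ioc (0:ℝ) (1/2))) →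
      (∀ x ∈ Set.Ioc (0:ℝ) (1/2), |f x| ≤ C) →
      IntervalIntegrable f MeasureTheory.volume 0 (1/2) := by
    intro f C hm hb
    rw [intervalIntegrable_iff, Set.uIoc_of_le (by norm_num : (0:ℝ) ≤ 1/2)]
    refine ⟨hm, ?_⟩
    apply MeasureTheory.HasFiniteIntegral.restrict_of_bounded (C := C)
      (by simp : MeasureTheory.volume (Set.Ioc (0:ℝ) (1/2)) < ⊤)
    filter_upwards [MeasureTheory.ae_restrict_mem measurableSet_Ioc] with x hx
    simpa using hb x hx
  have hWcIoc : ContinuousOn W (Set.Ioc (0:ℝ) (1/2)) :=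
    hWc.mono (fun x hx => ⟨hx.1.le, le_trans hx.2 (by norm_num)⟩)
  have hWposIoc : ∀ x ∈ Set.Ioc (0:ℝ) (1/2), 0 < W x := by
    intro x hx
    exact hpos x ⟨hx.1, lt_of_le_of_lt hx.2 (by norm_num)⟩
  -- integrability of f1 = W^(q-p) * W'
  have if1 : IntervalIntegrable (fun x => W x ^ (q-p) * deriv W x)
      MeasureTheory.volume 0 (1/2) := by
    apply key_int _ (ξ ^ (q-p) * M)
    · exact (((hWcIoc.rpow_const (fun x hx => Or.inr hqp.le)).aestronglyMeasurable
        measurableSet_Ioc).mul (measurable_deriv W).aestronglyMeasurable.restrict)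
    · intro x hx
      have hx2 : x ∈ Set.Icc (0:ℝ) (1/2) := ⟨hx.1.le, hx.2⟩
      rw [abs_mul, abs_of_nonneg (Real.rpow_nonneg (hWnn x hx2) _)]
      have h1 : W x ^ (q-p) ≤ ξ ^ (q-p) :=
        Real.rpow_le_rpow (hWnn x hx2) (hWle x hx2) hqp.le
      have h2 := hM x hx2
      have := Real.rpow_nonneg (hWnn x hx2) (q-p)
      exact mul_le_mul h1 h2 (abs_nonneg _) (Real.rpow_nonneg hξ.le _)
  -- integrability of f2 = x * W^(q-p-1)
  have if2 : IntervalIntegrable (fun x => x * W x ^ (q-p-1))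
      MeasureTheory.volume 0 (1/2) := by
    apply key_int _ (ξ ^ (q-p) / (2*ξ))
    · exact ((continuous_id.continuousOn).mul
        (hWcIoc.rpow_const (fun x hx => Or.inl (hWposIoc x hx).ne'))).aestronglyMeasurable
        measurableSet_Ioc
    · intro x hx
      have hx2 : x ∈ Set.Icc (0:ℝ) (1/2) := ⟨hx.1.le, hx.2⟩
      have hWx : 0 < W x := hWposIoc x hx
      have hlx : 2*ξ*x ≤ W x := hlin x hx2
      have hx0 : 0 < x := hx.1
      have h1 : W x ^ (q-p-1) = W x ^ (q-p) / W x := by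
        rw [Real.rpow_sub hWx, Real.rpow_one]
      rw [h1, abs_of_nonneg (by positivity)]
      have h2 : W x ^ (q-p) ≤ ξ ^ (q-p) :=
        Real.rpow_le_rpow (hWnn x hx2) (hWle x hx2) hqp.le
      have h3 : 0 < 2*ξ*x := by positivity
      calc x * (W x ^ (q-p) / W x) ≤ x * (ξ ^ (q-p) / (2*ξ*x)) := by
            apply mul_le_mul_of_nonneg_left _ hx0.le
            apply div_le_div₀ (Real.rpow_nonneg hξ.le _) h2 h3 hlx
        _ = ξ ^ (q-p) / (2*ξ) := by field_simp
  -- integrability of f3 = x * W^q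
  have if3 : IntervalIntegrable (fun x => x * W x ^ q)
      MeasureTheory.volume 0 (1/2) := by
    apply ContinuousOn.intervalIntegrable
    rw [Set.uIcc_of_le (by norm_num : (0:ℝ) ≤ 1/2)]
    exact (continuous_id.continuousOn).mul
      ((hWc.mono hsub).rpow_const (fun x hx => Or.inr (by linarith)))
  have hqp1 : (0:ℝ) < q - p + 1 := by linarith
  -- FTC A : integral of W^(q-p) * W'
  have ftcA : ∫ x in (0:ℝ)..(1/2), W x ^ (q-p) * deriv W x = ξ ^ (q-p+1) / (q-p+1) := by
    have h := intervalIntegral.integral_eq_sub_of_hasDerivAt_of_le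
      (f := fun x => W x ^ (q-p+1) / (q-p+1))
      (f' := fun x => W x ^ (q-p) * deriv W x)
      (by norm_num : (0:ℝ) ≤ 1/2)
      (((hWc.mono hsub).rpow_const (fun x hx => Or.inr hqp1.le)).div_const _)
      ?_ if1
    · rw [h]
      show W (1/2) ^ (q-p+1) / (q-p+1) - W 0 ^ (q-p+1) / (q-p+1) = _
      rw [hxi, h0, Real.zero_rpow (by positivity), zero_div, sub_zero]
    · intro x hx
      have hx1 : x ∈ Set.Ioo (0:ℝ) 1 := hsubo hx
      have hWx : 0 < W x := hpos x hx1
      have h2 := ((hWd x hx1).rpow_const (p := q-p+1) (Or.inl hWx.ne')).div_const (q-p+1)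
      refine h2.congr_deriv (Eq.symm ?_)
      have : q - p + 1 - 1 = q - p := by ring
      rw [this]
      field_simp
  -- FTC B
  set C2 : ℝ := (q-p) * (2/(p+1)) * ξ ^ (p+1) with hC2_def
  set C3 : ℝ := (q-p) * (2/(p+1)) + 1 with hC3_def
  set F : ℝ → ℝ := fun x => x * (W x ^ (q-p) * deriv W x) with hF_def
  set g : ℝ → ℝ := fun x => W x ^ (q-p) * deriv W x + C2 * (x * W x ^ (q-p-1))
      - C3 * (x * W x ^ q) with hg_def
  have ig : IntervalIntegrable g MeasureTheory.volume 0 (1/2) :=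
    (if1.add (if2.const_mul C2)).sub (if3.const_mul C3)
  have hcontF : ContinuousOn F (Set.Icc (0:ℝ) (1/2)) := by
    intro x hx
    rcases eq_or_lt_of_le hx.1 with h | h
    · -- x = 0
      subst h
      have hbd : ∀ y ∈ Set.Icc (0:ℝ) (1/2), ‖F y‖ ≤ (ξ ^ (q-p) * M) * y := by
        intro y hy
        have h1 : W y ^ (q-p) ≤ ξ ^ (q-p) :=
          Real.rpow_le_rpow (hWnn y hy) (hWle y hy) hqp.le
        have h2 := hM y hy
        have h3 : 0 ≤ W y ^ (q-p) := Real.rpow_nonneg (hWnn y hy)  _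
        simp only [hF_def, norm_mul, Real.norm_eq_abs]
        rw [abs_of_nonneg hy.1, abs_of_nonneg h3]
        calc y * (W y ^ (q-p) * |deriv W y|) ≤ y * (ξ ^ (q-p) * M) := by
              apply mul_le_mul_of_nonneg_left _ hy.1
              exact mul_le_mul h1 h2 (abs_nonneg _) (Real.rpow_nonneg hξ.le _)
          _ = (ξ ^ (q-p) * M) * y := by ring
      have htend : Filter.Tendsto F (nhdsWithin 0 (Set.Icc (0:ℝ) (1/2))) (nhds 0) := by
        refine squeeze_zero_norm'
          (Filter.eventually_iff_exists_mem.mpr ⟨_, self_mem_nhdsWithin, fun y hy => hbd y hy⟩) ?_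
        have : Filter.Tendsto (fun y : ℝ => (ξ ^ (q-p) * M) * y) (nhds 0) (nhds ((ξ ^ (q-p) * M) * 0)) :=
            (continuous_const.mul continuous_id).tendsto 0
        simpa using this.mono_left nhdsWithin_le_nhds
      have hF0 : F 0 = 0 := by simp [hF_def]
      rw [ContinuousWithinAt, hF0]
      exact htend
    · -- 0 < x
      have hx1 : x ∈ Set.Ioo (0:ℝ) 1 := ⟨h, lt_of_le_of_lt hx.2 (by norm_num)⟩
      apply ContinuousAt.continuousWithinAt
      have hWat : ContinuousAt W x := hWc.continuousAt (Icc_mem_nhds hx1.1 hx1.2)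
      have hW'at : ContinuousAt (deriv W) x :=
        hW'.continuousOn.continuousAt (isOpen_Ioo.mem_nhds hx1)
      have hrp : ContinuousAt (fun y => W y ^ (q-p)) x :=
        (Real.continuousAt_rpow_const _ _ (Or.inr hqp.le)).comp hWat
      exact continuousAt_id.mul (hrp.mul hW'at)
  have hderivF : ∀ x ∈ Set.Ioo (0:ℝ) (1/2), HasDerivAt F (g x) x := by
    intro x hx
    have hx1 : x ∈ Set.Ioo (0:ℝ) 1 := hsubo hx
    have hxI : x ∈ Set.Icc (0:ℝ) (1/2) := ⟨hx.1.le, hx.2.le⟩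
    have hWx : 0 < W x := hpos x hx1
    have h1 := hWd x hx1
    have h2 := hWd2 x hx1
    have h3 : HasDerivAt (fun y => W y ^ (q-p))
        (deriv W x * (q-p) * W x ^ (q-p-1)) x := h1.rpow_const (Or.inl hWx.ne')
    have h5 := (hasDerivAt_id x).mul (h3.mul h2)
    simp only [id_eq] at h5
    have hDD : deriv (deriv W) x = -(W x ^ p) := by
      have := hode x hx1; linarith
    have hE : deriv W x * deriv W x = (2/(p+1)) * (ξ ^ (p+1) - W x ^ (p+1)) := by
      have := henergy x hxI; nlinarith [this]
    have hP1 : W x ^ (q-p-1) * W x ^ (p+1) = W x ^ q := by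
      rw [← Real.rpow_add hWx]; norm_num
    have hP2 : W x ^ (q-p) * W x ^ p = W x ^ q := by
      rw [← Real.rpow_add hWx]; norm_num
    refine h5.congr_deriv (Eq.symm ?_)
    simp only [hg_def, hC2_def, hC3_def, Pi.mul_apply]
    rw [hDD]
    linear_combination (-(x * (q-p) * W x ^ (q-p-1))) * hE
      + (x * (q-p) * (2/(p+1))) * hP1 + x * hP2
  have ftcB : ∫ x in (0:ℝ)..(1/2), g x = 0 := by
    rw [intervalIntegral.integral_eq_sub_of_hasDerivAt_of_le
      (by norm_num : (0:ℝ) ≤ 1/2) hcontF hderivF ig]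
    have hd' : deriv W 2⁻¹ = 0 := by rw [show (2:ℝ)⁻¹ = 1/2 by norm_num]; exact hd
    simp [hF_def, h0, hd, hd']
  -- split the integral
  have hsplit : ∫ x in (0:ℝ)..(1/2), g x
      = (∫ x in (0:ℝ)..(1/2), W x ^ (q-p) * deriv W x)
        + C2 * (∫ x in (0:ℝ)..(1/2), x * W x ^ (q-p-1))
        - C3 * (∫ x in (0:ℝ)..(1/2), x * W x ^ q) := by
    simp only [hg_def]
    rw [intervalIntegral.integral_sub (if1.add (if2.const_mul C2)) (if3.const_mul C3),
      intervalIntegral.integral_add if1 (if2.const_mul C2),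
      intervalIntegral.integral_const_mul, intervalIntegral.integral_const_mul]
  -- final algebra
  set I2 := ∫ x in (0:ℝ)..(1/2), x * W x ^ (q-p-1) with hI2
  set I3 := ∫ x in (0:ℝ)..(1/2), x * W x ^ q with hI3
  rw [ftcB, ftcA] at hsplit
  have h2q : (0:ℝ) < 2*q - p + 1 := by linarith
  rw [hC2_def, hC3_def] at hsplit
  have hqp1' : q - p + 1 ≠ 0 := ne_of_gt hqp1
  have hp1' : p + 1 ≠ 0 := ne_of_gt hp1
  have h2q' : 2*q - p + 1 ≠ 0 := ne_of_gt h2q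
  rw [div_mul_eq_mul_div, eq_div_iff h2q']
  field_simp at hsplit ⊢
  linear_combination hsplit
end

section
/- Let p > 1, ξ > 0, and let W : [0,1] → ℝ be a C² function with -W'' = W^p on (0,1), W > 0 on (0,1), W(x) = W(1-x) for all x, W(0) = W(1) = 0, W'(1/2) = 0, W(1/2) = ξ, W' > 0 on [0,1/2), and (W')² = (2/(p+1))·(ξ^{p+1} − W^{p+1}) on [0,1/2]. Define L_{p,1} := ∫₀¹ s/sqrt(1−s^{p+1}) ds. Then ∫₀¹ (1-x)³·W(x)^p dx = sqrt(2/(p+1))·ξ^{(p+1)/2} − 3·sqrt(2(p+1))·ξ^{(3-p)/2}·L_{p,1}. -/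
open Set MeasureTheory intervalIntegral

theorem stmt14 (p ξ : ℝ) (hp : 1 < p) (hξ : 0 < ξ) (W : ℝ → ℝ)
    (hW : ContDiffOn ℝ 2 W (Set.Icc 0 1))
    (hode : ∀ x ∈ Set.Ioo (0:ℝ) 1, -(deriv (deriv W) x) = W x ^ p)
    (hpos : ∀ x ∈ Set.Ioo (0:ℝ) 1, 0 < W x)
    (hsym : ∀ x ∈ Set.Icc (0:ℝ) 1, W x = W (1 - x))
    (h0 : W 0 = 0) (h1 : W 1 = 0)
    (hd : deriv W (1/2) = 0) (hxi : W (1/2) = ξ)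
    (hd' : ∀ x ∈ Set.Ico (0:ℝ) (1/2), 0 < deriv W x)
    (henergy : ∀ x ∈ Set.Icc (0:ℝ) (1/2),
      (deriv W x) ^ 2 = (2/(p+1)) * (ξ ^ (p+1) - W x ^ (p+1))) :
    ∫ x in (0:ℝ)..1, (1 - x) ^ 3 * W x ^ p
      = Real.sqrt (2/(p+1)) * ξ ^ ((p+1)/2)
        - 3 * Real.sqrt (2*(p+1)) * ξ ^ ((3 - p)/2)
          * ∫ s in (0:ℝ)..1, s / Real.sqrt (1 - s ^ (p+1)) := by
  have hp1 : (0:ℝ) < p + 1 := by linarith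
  have hcpos : (0:ℝ) < 2/(p+1) := by positivity
  have hWc : ContinuousOn W (Icc 0 1) := hW.continuousOn
  have hWc2 : ContinuousOn W (Icc 0 (1/2)) :=
    hWc.mono (Icc_subset_Icc le_rfl (by norm_num))
  have hsub : Ioo (0:ℝ) (1/2) ⊆ Ioo 0 1 := Ioo_subset_Ioo le_rfl (by norm_num)
  -- first derivative at interior points
  have hDW : ∀ x ∈ Ioo (0:ℝ) 1, HasDerivAt W (deriv W x) x := by
    intro x hx
    have h1 : ContDiffAt ℝ 2 W x := hW.contDiffAt (Icc_mem_nhds hx.1 hx.2)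
    exact (h1.differentiableAt (by norm_num)).hasDerivAt
  -- second derivative at interior points
  have hDDW : ∀ x ∈ Ioo (0:ℝ) 1, HasDerivAt (deriv W) (deriv (deriv W) x) x := by
    intro x hx
    have h1 : ContDiffAt ℝ 2 W x := hW.contDiffAt (Icc_mem_nhds hx.1 hx.2)
    obtain ⟨u, hu, hcd⟩ := h1.contDiffOn le_rfl (by simp)
    have hx' : x ∈ interior u := mem_interior_iff_mem_nhds.2 hu
    have hcd' : ContDiffOn ℝ 2 W (interior u) := hcd.mono interior_subset
    have h2 : ContDiffOn ℝ 1 (deriv W) (interior u) :=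
      hcd'.deriv_of_isOpen isOpen_interior (by norm_num)
    have h3 := (h2.differentiableOn one_ne_zero).differentiableAt
      (isOpen_interior.mem_nhds hx')
    exact h3.hasDerivAt
  -- the deriv formula on [0,1/2]
  have hWnn : ∀ x ∈ Icc (0:ℝ) (1/2), 0 ≤ W x := by
    intro x hx
    rcases eq_or_lt_of_le hx.1 with h | h
    · rw [← h, h0]
    · exact (hpos x ⟨h, lt_of_le_of_lt hx.2 (by norm_num)⟩).le
  have hderiv_eq : ∀ x ∈ Icc (0:ℝ) (1/2),
      deriv W x = Real.sqrt ((2/(p+1)) * (ξ ^ (p+1) - W x ^ (p+1))) := by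
    intro x hx
    rcases eq_or_lt_of_le hx.2 with h | h
    · rw [h, hd, hxi]
      simp
    · have hpos' := hd' x ⟨hx.1, h⟩
      rw [← henergy x hx, Real.sqrt_sq hpos'.le]
  have hderivcont : ContinuousOn (deriv W) (Icc 0 (1/2)) := by
    have hcont : ContinuousOn
        (fun x => Real.sqrt ((2/(p+1)) * (ξ ^ (p+1) - W x ^ (p+1)))) (Icc 0 (1/2)) := by
      apply Real.continuous_sqrt.comp_continuousOn
      exact continuousOn_const.mul (continuousOn_const.sub
        (hWc2.rpow_const (fun x hx => Or.inr hp1.le)))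
    exact hcont.congr hderiv_eq
  -- strict monotonicity on [0,1/2]
  have hmono : StrictMonoOn W (Icc 0 (1/2)) := by
    apply strictMonoOn_of_deriv_pos (convex_Icc 0 (1/2)) hWc2
    intro x hx
    rw [interior_Icc] at hx
    exact hd' x ⟨hx.1.le, hx.2⟩
  have hWle : ∀ x ∈ Icc (0:ℝ) (1/2), W x ≤ ξ := by
    intro x hx
    rw [← hxi]
    exact hmono.monotoneOn hx ⟨by norm_num, le_rfl⟩ hx.2
  have hWlt : ∀ x ∈ Ioo (0:ℝ) (1/2), W x < ξ := by
    intro x hx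
    rw [← hxi]
    exact hmono ⟨hx.1.le, hx.2.le⟩ ⟨by norm_num, le_rfl⟩ hx.2
  -- value of deriv W 0
  have hD0pos : 0 < deriv W 0 := hd' 0 ⟨le_rfl, by norm_num⟩
  have hD0 : deriv W 0 = Real.sqrt (2/(p+1)) * ξ ^ ((p+1)/2) := by
    have e0 := henergy 0 ⟨le_rfl, by norm_num⟩
    rw [h0, Real.zero_rpow hp1.ne', sub_zero] at e0
    have : deriv W 0 = Real.sqrt ((2/(p+1)) * ξ ^ (p+1)) := by
      rw [← e0, Real.sqrt_sq hD0pos.le]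
    rw [this, Real.sqrt_mul hcpos.le, Real.sqrt_eq_rpow (ξ ^ (p+1)),
      ← Real.rpow_mul hξ.le, show (p+1)*(1/2 : ℝ) = (p+1)/2 by ring]
  -- FTC step on [0, 1/2]
  have hqc : ContinuousOn (fun x : ℝ => (1-x)^3 + x^3) (Icc 0 (1/2)) :=
    (((continuousOn_const.sub continuousOn_id).pow 3).add (continuousOn_id.pow 3))
  have hWpc2 : ContinuousOn (fun x => W x ^ p) (Icc 0 (1/2)) :=
    hWc2.rpow_const (fun x _ => Or.inr (by linarith))
  have hFTC : ∫ x in (0:ℝ)..(1/2), (((1-x)^3 + x^3) * W x ^ p + 6 * W x)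
      = deriv W 0 := by
    have hmain := intervalIntegral.integral_eq_sub_of_hasDerivAt_of_le
      (f := fun x => -(((1-x)^3 + x^3) * deriv W x) + (6*x - 3) * W x)
      (f' := fun x => ((1-x)^3 + x^3) * W x ^ p + 6 * W x)
      (by norm_num : (0:ℝ) ≤ 1/2)
      ?_ ?_ ?_
    · rw [hmain]
      norm_num [hd, h0]
    · exact ((hqc.mul hderivcont).neg).add
        (((continuousOn_const.mul continuousOn_id).sub continuousOn_const).mul hWc2)
    · intro x hx
      have hid := hasDerivAt_id x
      have hone : HasDerivAt (fun y:ℝ => 1 - y) (-1) x := by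
        simpa using (hasDerivAt_id x).const_sub (1:ℝ)
      have hq : HasDerivAt (fun y:ℝ => (1-y)^3 + y^3)
          (((3:ℕ):ℝ)*(1-x)^(3-1)*(-1) + ((3:ℕ):ℝ)*x^(3-1)*1) x := (hone.pow 3).add (hid.pow 3)
      have hl : HasDerivAt (fun y:ℝ => 6*y - 3) (6*1) x := by
        exact ((hasDerivAt_id x).const_mul (6:ℝ)).sub_const 3
      have hw := hDW x (hsub hx)
      have hw2 := hDDW x (hsub hx)
      have hode' : deriv (deriv W) x = -(W x ^ p) := by
        have := hode x (hsub hx); linarith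
      have hfull := ((hq.mul hw2).neg).add (hl.mul hw)
      convert hfull using 1
      · funext y; rfl
      rw [hode']
      push_cast
      ring
    · apply ContinuousOn.intervalIntegrable
      rw [uIcc_of_le (by norm_num : (0:ℝ) ≤ 1/2)]
      exact (hqc.mul hWpc2).add (continuousOn_const.mul hWc2)
  have hi1 : IntervalIntegrable (fun x => ((1-x)^3 + x^3) * W x ^ p) volume 0 (1/2) := by
    apply ContinuousOn.intervalIntegrable
    rw [uIcc_of_le (by norm_num : (0:ℝ) ≤ 1/2)]
    exact hqc.mul hWpc2
  have hi2 : IntervalIntegrable W volume 0 (1/2) := by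
    apply ContinuousOn.intervalIntegrable
    rw [uIcc_of_le (by norm_num : (0:ℝ) ≤ 1/2)]
    exact hWc2
  have hsplit : ∫ x in (0:ℝ)..(1/2), ((1-x)^3 + x^3) * W x ^ p
      = deriv W 0 - 6 * ∫ x in (0:ℝ)..(1/2), W x := by
    rw [intervalIntegral.integral_add hi1 (hi2.const_mul 6),
      intervalIntegral.integral_const_mul] at hFTC
    linarith
  -- reflection
  have hint01 : IntervalIntegrable (fun x => (1-x)^3 * W x ^ p) volume 0 1 := by
    apply ContinuousOn.intervalIntegrable
    rw [uIcc_of_le (by norm_num : (0:ℝ) ≤ 1)]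
    exact ((continuousOn_const.sub continuousOn_id).pow 3).mul
      (hWc.rpow_const (fun x _ => Or.inr (by linarith)))
  have hrefl : ∫ x in (1/2:ℝ)..1, (1-x)^3 * W x ^ p
      = ∫ x in (0:ℝ)..(1/2), x^3 * W x ^ p := by
    have h := intervalIntegral.integral_comp_sub_left (a := 0) (b := 1/2)
      (fun y => (1-y)^3 * W y ^ p) 1
    have h2 : (∫ x in (1/2:ℝ)..1, (1-x)^3 * W x ^ p)
        = ∫ x in (0:ℝ)..(1/2), (1-(1-x))^3 * W (1-x) ^ p := by
      rw [h]; norm_num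
    rw [h2]
    apply intervalIntegral.integral_congr
    intro x hx
    rw [uIcc_of_le (by norm_num : (0:ℝ) ≤ 1/2)] at hx
    have hx1 : x ∈ Icc (0:ℝ) 1 := ⟨hx.1, le_trans hx.2 (by norm_num)⟩
    show (1-(1-x))^3 * W (1-x) ^ p = x^3 * W x ^ p
    rw [← hsym x hx1, show 1-(1-x) = x by ring]
  have hsplit01 : ∫ x in (0:ℝ)..1, (1-x)^3 * W x ^ p
      = ∫ x in (0:ℝ)..(1/2), ((1-x)^3 + x^3) * W x ^ p := by
    have hadj := intervalIntegral.integral_add_adjacent_intervals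
      (hint01.mono_set (by rw [uIcc_of_le (by norm_num : (0:ℝ) ≤ 1/2),
        uIcc_of_le (by norm_num : (0:ℝ) ≤ 1)]; exact Icc_subset_Icc le_rfl (by norm_num)))
      (hint01.mono_set (by rw [uIcc_of_le (by norm_num : (1/2:ℝ) ≤ 1),
        uIcc_of_le (by norm_num : (0:ℝ) ≤ 1)]; exact Icc_subset_Icc (by norm_num) le_rfl))
    rw [← hadj, hrefl, ← intervalIntegral.integral_add
      (hint01.mono_set (by rw [uIcc_of_le (by norm_num : (0:ℝ) ≤ 1/2),
        uIcc_of_le (by norm_num : (0:ℝ) ≤ 1)]; exact Icc_subset_Icc le_rfl (by norm_num)))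
      (by
        apply ContinuousOn.intervalIntegrable
        rw [uIcc_of_le (by norm_num : (0:ℝ) ≤ 1/2)]
        exact (continuousOn_id.pow 3).mul hWpc2)]
    apply intervalIntegral.integral_congr
    intro x hx
    show (1-x)^3 * W x ^ p + x^3 * W x ^ p = ((1-x)^3 + x^3) * W x ^ p
    ring
  -- the singular integrand
  set g : ℝ → ℝ := fun u => u / Real.sqrt ((2/(p+1)) * (ξ ^ (p+1) - u ^ (p+1))) with hg_def
  have hrpowc : Continuous (fun u : ℝ => u ^ (p+1)) := by
    rw [continuous_iff_continuousAt]
    intro u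
    exact Real.continuousAt_rpow_const u (p+1) (Or.inr hp1.le)
  have hsqc : Continuous (fun u : ℝ => Real.sqrt ((2/(p+1)) * (ξ ^ (p+1) - u ^ (p+1)))) :=
    Real.continuous_sqrt.comp (continuous_const.mul (continuous_const.sub hrpowc))
  have hgmeas : Measurable g := measurable_id.div hsqc.measurable
  -- integrability of g on [0, ξ]
  have hmaj : IntervalIntegrable
      (fun u : ℝ => (ξ / Real.sqrt ((2/(p+1)) * ξ ^ p)) * (ξ - u) ^ (-(1/2) : ℝ))
      volume 0 ξ := by
    have h1 : IntervalIntegrable (fun u : ℝ => u ^ (-(1/2):ℝ)) volume ξ 0 :=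
      intervalIntegral.intervalIntegrable_rpow' (by norm_num)
    have h2 := h1.comp_sub_left ξ
    simp only [sub_self, sub_zero] at h2
    exact h2.const_mul _
  have hApos : 0 < Real.sqrt ((2/(p+1)) * ξ ^ p) := by
    apply Real.sqrt_pos.2
    have := Real.rpow_pos_of_pos hξ p
    positivity
  have hgbound : ∀ u ∈ Ioc (0:ℝ) ξ,
      g u ≤ (ξ / Real.sqrt ((2/(p+1)) * ξ ^ p)) * (ξ - u) ^ (-(1/2) : ℝ) := by
    intro u hu
    have hup : u ^ p ≤ ξ ^ p := Real.rpow_le_rpow hu.1.le hu.2 (by linarith)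
    have hxe : ξ ^ (p+1) = ξ ^ p * ξ := by
      rw [Real.rpow_add hξ, Real.rpow_one]
    have hue : u ^ (p+1) = u ^ p * u := by
      rw [Real.rpow_add hu.1, Real.rpow_one]
    have hupos : 0 < u ^ p := Real.rpow_pos_of_pos hu.1 p
    have hkey : (2/(p+1)) * ξ ^ p * (ξ - u) ≤ (2/(p+1)) * (ξ ^ (p+1) - u ^ (p+1)) := by
      rw [hxe, hue]
      have h3 : u * (ξ ^ p - u ^ p) ≥ 0 := mul_nonneg hu.1.le (by linarith)
      have h4 : ξ ^ p * ξ - u ^ p * u - ξ ^ p * (ξ - u) = u * (ξ ^ p - u ^ p) := by ring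
      nlinarith [hcpos]
    rcases eq_or_lt_of_le hu.2 with h | h
    · have hz1 : (2/(p+1)) * (ξ ^ (p+1) - u ^ (p+1)) = 0 := by rw [h]; ring
      have hz2 : ξ - u = 0 := by rw [h]; ring
      show u / Real.sqrt ((2/(p+1)) * (ξ ^ (p+1) - u ^ (p+1))) ≤ _
      rw [hz1, Real.sqrt_zero, div_zero, hz2,
        Real.zero_rpow (by norm_num : (-(1/2):ℝ) ≠ 0), mul_zero]
    · have hBpos : 0 < Real.sqrt (ξ - u) := Real.sqrt_pos.2 (by linarith)
      have hprod : Real.sqrt ((2/(p+1)) * ξ ^ p) * Real.sqrt (ξ - u)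
          ≤ Real.sqrt ((2/(p+1)) * (ξ ^ (p+1) - u ^ (p+1))) := by
        rw [← Real.sqrt_mul (by positivity)]
        exact Real.sqrt_le_sqrt hkey
      have hle : g u ≤ ξ / (Real.sqrt ((2/(p+1)) * ξ ^ p) * Real.sqrt (ξ - u)) := by
        show u / Real.sqrt ((2/(p+1)) * (ξ ^ (p+1) - u ^ (p+1))) ≤ _
        exact div_le_div₀ hξ.le hu.2 (by positivity) hprod
      calc g u ≤ ξ / (Real.sqrt ((2/(p+1)) * ξ ^ p) * Real.sqrt (ξ - u)) := hle
        _ = (ξ / Real.sqrt ((2/(p+1)) * ξ ^ p)) * (ξ - u) ^ (-(1/2) : ℝ) := by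
            rw [Real.rpow_neg (by linarith : (0:ℝ) ≤ ξ - u), ← Real.sqrt_eq_rpow,
              ← div_div, div_eq_mul_inv (ξ / _)]
  have hgnn : ∀ u ∈ Ioc (0:ℝ) ξ, 0 ≤ g u := by
    intro u hu
    rw [hg_def]
    exact div_nonneg hu.1.le (Real.sqrt_nonneg _)
  have hgint : IntervalIntegrable g volume 0 ξ := by
    apply hmaj.mono_fun' (hgmeas.aestronglyMeasurable.restrict)
    rw [uIoc_of_le hξ.le]
    filter_upwards [ae_restrict_mem measurableSet_Ioc] with u hu
    rw [Real.norm_eq_abs, abs_of_nonneg (hgnn u hu)]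
    exact hgbound u hu
  have hIg : IntegrableOn g (Icc 0 ξ) := by
    rw [integrableOn_Icc_iff_integrableOn_Ioc]
    exact (intervalIntegrable_iff_integrableOn_Ioc_of_le hξ.le).1 hgint
  -- substitution
  have himg1 : W '' (Ioo 0 (1/2)) ⊆ Ioo 0 ξ := by
    rintro _ ⟨x, hx, rfl⟩
    exact ⟨hpos x (hsub hx), hWlt x hx⟩
  have himg2 : W '' (Icc 0 (1/2)) ⊆ Icc 0 ξ := by
    rintro _ ⟨x, hx, rfl⟩
    exact ⟨hWnn x hx, hWle x hx⟩
  have hgcont : ContinuousOn g (Ioo 0 ξ) := by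
    apply ContinuousOn.div continuousOn_id hsqc.continuousOn
    intro u hu
    apply ne_of_gt
    apply Real.sqrt_pos.2
    have := Real.rpow_lt_rpow hu.1.le hu.2 hp1
    have h2 : (0:ℝ) < ξ ^ (p+1) - u ^ (p+1) := by linarith
    positivity
  have hae : ∀ᵐ x : ℝ ∂volume, x ≠ (1/2:ℝ) := by
    rw [ae_iff]
    have hset : {x : ℝ | ¬ x ≠ 1/2} = {(1/2:ℝ)} := by ext x; simp
    rw [hset]
    exact measure_singleton _
  have hptwise : ∀ x ∈ Icc (0:ℝ) (1/2), x ≠ 1/2 → deriv W x • (g ∘ W) x = W x := by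
    intro x hx hne
    have hx2 : x ∈ Ico (0:ℝ) (1/2) := ⟨hx.1, lt_of_le_of_ne hx.2 hne⟩
    have hdpos := hd' x hx2
    have heq := hderiv_eq x hx
    show deriv W x • g (W x) = W x
    rw [hg_def, smul_eq_mul]
    simp only
    rw [← heq]
    field_simp
  have hsubst : ∫ x in (0:ℝ)..(1/2), W x = ∫ u in (0:ℝ)..ξ, g u := by
    have key := intervalIntegral.integral_comp_smul_deriv''' (a := 0) (b := 1/2)
      (f := W) (f' := deriv W) (g := g) ?_ ?_ ?_ ?_ ?_
    · rw [h0, hxi] at key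
      rw [← key]
      apply intervalIntegral.integral_congr_ae
      filter_upwards [hae] with x hxne hmem
      rw [uIoc_of_le (by norm_num : (0:ℝ) ≤ 1/2)] at hmem
      exact (hptwise x ⟨hmem.1.le, hmem.2⟩ hxne).symm
    · rw [uIcc_of_le (by norm_num : (0:ℝ) ≤ 1/2)]
      exact hWc2
    · intro x hx
      rw [show min (0:ℝ) (1/2) = 0 by norm_num, show max (0:ℝ) (1/2) = 1/2 by norm_num] at hx
      exact (hDW x (hsub hx)).hasDerivWithinAt
    · rw [show min (0:ℝ) (1/2) = 0 by norm_num, show max (0:ℝ) (1/2) = 1/2 by norm_num]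
      exact hgcont.mono himg1
    · rw [uIcc_of_le (by norm_num : (0:ℝ) ≤ 1/2)]
      exact hIg.mono_set himg2
    · rw [uIcc_of_le (by norm_num : (0:ℝ) ≤ 1/2)]
      apply (hWc2.integrableOn_compact isCompact_Icc).congr
      filter_upwards [ae_restrict_of_ae hae, ae_restrict_mem measurableSet_Icc] with x hxne hxmem
      exact (hptwise x hxmem hxne).symm
  -- scaling of the singular integral
  have hA : Real.sqrt ((2/(p+1)) * ξ ^ (p+1)) = Real.sqrt (2/(p+1)) * ξ ^ ((p+1)/2) := by
    rw [Real.sqrt_mul hcpos.le, Real.sqrt_eq_rpow (ξ ^ (p+1)), ← Real.rpow_mul hξ.le,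
      show (p+1)*(1/2 : ℝ) = (p+1)/2 by ring]
  have hC : ξ / (Real.sqrt (2/(p+1)) * ξ ^ ((p+1)/2))
      = Real.sqrt ((p+1)/2) * ξ ^ ((1-p)/2) := by
    have hs2 : Real.sqrt ((p+1)/2) = (Real.sqrt (2/(p+1)))⁻¹ := by
      rw [← Real.sqrt_inv, inv_div]
    have hxp : ξ ^ ((1-p)/2 : ℝ) = ξ / ξ ^ ((p+1)/2 : ℝ) := by
      rw [show (1-p)/2 = 1 - (p+1)/2 by ring, Real.rpow_sub hξ, Real.rpow_one]
    have hne1 : Real.sqrt (2/(p+1)) ≠ 0 := ne_of_gt (Real.sqrt_pos.2 hcpos)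
    have hne2 : ξ ^ ((p+1)/2 : ℝ) ≠ 0 := ne_of_gt (Real.rpow_pos_of_pos hξ _)
    rw [hs2, hxp]
    field_simp
  have hscale : ∫ u in (0:ℝ)..ξ, g u
      = Real.sqrt ((p+1)/2) * ξ ^ ((3-p)/2)
        * ∫ s in (0:ℝ)..1, s / Real.sqrt (1 - s ^ (p+1)) := by
    have h := intervalIntegral.integral_comp_mul_right (a := 0) (b := 1) g hξ.ne'
    simp only [zero_mul, one_mul, smul_eq_mul] at h
    have h2 : ∫ u in (0:ℝ)..ξ, g u = ξ * ∫ x in (0:ℝ)..1, g (x * ξ) := by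
      rw [h, ← mul_assoc, mul_inv_cancel₀ hξ.ne', one_mul]
    rw [h2]
    have h3 : ∀ s ∈ uIcc (0:ℝ) 1,
        g (s * ξ) = (Real.sqrt ((p+1)/2) * ξ ^ ((1-p)/2))
          * (s / Real.sqrt (1 - s ^ (p+1))) := by
      intro s hs
      rw [uIcc_of_le (by norm_num : (0:ℝ) ≤ 1)] at hs
      show s * ξ / Real.sqrt ((2/(p+1)) * (ξ ^ (p+1) - (s*ξ) ^ (p+1))) = _
      rw [Real.mul_rpow hs.1 hξ.le]
      have harg : (2/(p+1)) * (ξ ^ (p+1) - s ^ (p+1) * ξ ^ (p+1))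
          = ((2/(p+1)) * ξ ^ (p+1)) * (1 - s ^ (p+1)) := by ring
      rw [harg, Real.sqrt_mul (by positivity), hA, ← div_div, mul_div_assoc s ξ _, hC,
        mul_comm s (Real.sqrt ((p+1)/2) * ξ ^ ((1-p)/2)), mul_div_assoc]
    rw [intervalIntegral.integral_congr h3, intervalIntegral.integral_const_mul]
    have hxx : ξ * ξ ^ ((1-p)/2 : ℝ) = ξ ^ ((3-p)/2 : ℝ) := by
      rw [show (3-p)/2 = 1 + (1-p)/2 by ring, Real.rpow_add hξ, Real.rpow_one]
    rw [← hxx]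
    ring
  have h62 : (6:ℝ) * Real.sqrt ((p+1)/2) = 3 * Real.sqrt (2*(p+1)) := by
    rw [show (2:ℝ)*(p+1) = 2^2 * ((p+1)/2) by ring,
      Real.sqrt_mul (by norm_num : (0:ℝ) ≤ 2^2),
      Real.sqrt_sq (by norm_num : (0:ℝ) ≤ 2)]
    ring
  rw [hsplit01, hsplit, hsubst, hscale, hD0]
  linear_combination (-(ξ ^ ((3-p)/2 : ℝ) * ∫ s in (0:ℝ)..1, s / Real.sqrt (1 - s ^ (p+1)))) * h62
end

section
/- Let p > 1, ξ > 0, and let W : [0,1] → ℝ be C¹ with W(0) = 0, W(1/2) = ξ, W strictly increasing on [0,1/2], and W'(x) = sqrt((2/(p+1))·(ξ^{p+1} − W(x)^{p+1})) on [0,1/2). Define L_{p,1} := ∫₀¹ s/sqrt(1−s^{p+1}) ds. Then ∫₀^{1/2} W(x) dx = sqrt((p+1)/2)·ξ^{(3-p)/2}·L_{p,1}. -/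
open Set MeasureTheory intervalIntegral Real

/-- Integrability of `s / √(1 - s^(p+1))` on `[0,1]`. -/
lemma aux_int_h (p : ℝ) (hp : 1 < p) :
    IntervalIntegrable (fun s : ℝ => s / Real.sqrt (1 - s ^ (p+1))) volume 0 1 := by
  have hp1 : (0:ℝ) < p + 1 := by linarith
  -- the dominating function
  have hk : IntervalIntegrable (fun s : ℝ => (1 - s) ^ (-(1/2) : ℝ)) volume 0 1 := by
    have h1 : IntervalIntegrable (fun x : ℝ => x ^ (-(1/2) : ℝ)) volume 0 1 :=
      intervalIntegral.intervalIntegrable_rpow' (by norm_num)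
    have h2 := h1.comp_sub_left 1
    norm_num at h2
    exact h2.symm
  have hcontpow : Continuous fun s : ℝ => s ^ (p+1) :=
    continuous_iff_continuousAt.2 fun x => Real.continuousAt_rpow_const x _ (Or.inr hp1.le)
  have hmeas : Measurable fun s : ℝ => s / Real.sqrt (1 - s ^ (p+1)) :=
    measurable_id.div (Real.continuous_sqrt.comp (continuous_const.sub hcontpow)).measurable
  rw [intervalIntegrable_iff_integrableOn_Icc_of_le (by norm_num : (0:ℝ) ≤ 1)] at hk ⊢
  refine hk.mono' hmeas.aestronglyMeasurable ?_
  rw [ae_restrict_iff' measurableSet_Icc]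
  refine Filter.Eventually.of_forall fun s hs => ?_
  rcases eq_or_lt_of_le hs.2 with h1 | h1
  · subst h1
    simp [Real.one_rpow, Real.zero_rpow (by norm_num : (-(1/2) : ℝ) ≠ 0)]
  · have hs0 : 0 ≤ s := hs.1
    have hle : s ^ (p+1) ≤ s := by
      rcases eq_or_lt_of_le hs0 with h0 | h0
      · rw [← h0, Real.zero_rpow (by positivity)]
      · calc s ^ (p+1) ≤ s ^ (1:ℝ) :=
              Real.rpow_le_rpow_of_exponent_ge h0 hs.2 (by linarith)
          _ = s := Real.rpow_one s
    have hpos : 0 < Real.sqrt (1 - s) := Real.sqrt_pos.2 (by linarith)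
    have hb : s / Real.sqrt (1 - s ^ (p+1)) ≤ 1 / Real.sqrt (1 - s) :=
      div_le_div₀ (by norm_num) hs.2 hpos (Real.sqrt_le_sqrt (by linarith))
    have hk1 : (1 - s) ^ (-(1/2) : ℝ) = 1 / Real.sqrt (1 - s) := by
      rw [Real.rpow_neg (by linarith), Real.sqrt_eq_rpow]; norm_num
    rw [Real.norm_eq_abs, abs_of_nonneg (div_nonneg hs0 (Real.sqrt_nonneg _)), hk1]
    exact hb

theorem stmt15 (p ξ : ℝ) (hp : 1 < p) (hξ : 0 < ξ) (W : ℝ → ℝ)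
    (hW : ContDiffOn ℝ 1 W (Set.Icc 0 1))
    (h0 : W 0 = 0) (hxi : W (1/2) = ξ)
    (hmono : StrictMonoOn W (Set.Icc 0 (1/2)))
    (hd : ∀ x ∈ Set.Ico (0:ℝ) (1/2),
      deriv W x = Real.sqrt ((2/(p+1)) * (ξ ^ (p+1) - W x ^ (p+1)))) :
    ∫ x in (0:ℝ)..(1/2), W x
      = Real.sqrt ((p+1)/2) * ξ ^ ((3 - p)/2)
        * ∫ s in (0:ℝ)..1, s / Real.sqrt (1 - s ^ (p+1)) := by
  have hp1 : (0:ℝ) < p + 1 := by linarith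
  have hc : (0:ℝ) < 2 / (p+1) := by positivity
  set h : ℝ → ℝ := fun s => s / Real.sqrt (1 - s ^ (p+1)) with hh
  set g : ℝ → ℝ := fun u => u / Real.sqrt ((2/(p+1)) * (ξ ^ (p+1) - u ^ (p+1))) with hg
  set B : ℝ := Real.sqrt (2/(p+1)) with hB
  set E : ℝ := Real.sqrt (ξ ^ (p+1)) with hE
  have hBpos : 0 < B := Real.sqrt_pos.2 hc
  have hEpos : 0 < E := Real.sqrt_pos.2 (Real.rpow_pos_of_pos hξ _)
  set A : ℝ := ξ / (B * E) with hA
  have hcontpow : Continuous fun s : ℝ => s ^ (p+1) :=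
    continuous_iff_continuousAt.2 fun x => Real.continuousAt_rpow_const x _ (Or.inr hp1.le)
  have hden_cont : Continuous fun u : ℝ =>
      Real.sqrt ((2/(p+1)) * (ξ ^ (p+1) - u ^ (p+1))) :=
    Real.continuous_sqrt.comp (continuous_const.mul (continuous_const.sub hcontpow))
  have hgmeas : Measurable g := measurable_id.div hden_cont.measurable
  -- the scaling identity on [0, ξ]
  have hEq : Set.EqOn g (fun u => A * h (u / ξ)) (Set.Icc 0 ξ) := by
    intro u hu
    have hnum : 0 ≤ ξ ^ (p+1) - u ^ (p+1) := by
      have := Real.rpow_le_rpow hu.1 hu.2 hp1.le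
      linarith
    have hsd : Real.sqrt ((2/(p+1)) * (ξ ^ (p+1) - u ^ (p+1)))
        = B * (E * Real.sqrt (1 - (u/ξ) ^ (p+1))) := by
      have h1 : (u/ξ) ^ (p+1) = u ^ (p+1) / ξ ^ (p+1) := Real.div_rpow hu.1 hξ.le _
      have h2 : (1:ℝ) - u ^ (p+1) / ξ ^ (p+1)
          = (ξ ^ (p+1) - u ^ (p+1)) / ξ ^ (p+1) := by
        rw [eq_div_iff (ne_of_gt (Real.rpow_pos_of_pos hξ _)), sub_mul, one_mul,
          div_mul_cancel₀ _ (ne_of_gt (Real.rpow_pos_of_pos hξ (p+1)))]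
      rw [Real.sqrt_mul hc.le, h1, h2, Real.sqrt_div hnum,
        mul_div_cancel₀ _ (ne_of_gt hEpos)]
    show u / Real.sqrt ((2/(p+1)) * (ξ ^ (p+1) - u ^ (p+1)))
        = A * ((u/ξ) / Real.sqrt (1 - (u/ξ) ^ (p+1)))
    rw [hsd, hA, div_mul_div_comm, mul_comm ξ (u/ξ), div_mul_cancel₀ u hξ.ne',
      mul_assoc]
  -- integrability of g on [0, ξ]
  have hIA : IntervalIntegrable (fun u => A * h (u / ξ)) volume 0 ξ := by
    have h1 := (aux_int_h p hp).comp_mul_right (c := ξ⁻¹)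
    have h2 : IntervalIntegrable (fun u : ℝ => h (u / ξ)) volume 0 ξ := by
      simpa [hh, div_eq_mul_inv, inv_inv, hξ.ne'] using h1
    exact h2.const_mul A
  have hIg : IntervalIntegrable g volume 0 ξ := by
    rw [intervalIntegrable_iff_integrableOn_Icc_of_le hξ.le] at hIA ⊢
    refine hIA.congr ?_
    exact (ae_restrict_iff' measurableSet_Icc).2
      (Filter.Eventually.of_forall fun u hu => (hEq hu).symm)
  -- the primitive Φ
  set Φ : ℝ → ℝ := fun v => ∫ u in (0:ℝ)..v, g u with hΦ
  -- continuity of W on [0, 1/2] and mapping into [0, ξ]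
  have hsub : Set.Icc (0:ℝ) (1/2) ⊆ Set.Icc (0:ℝ) 1 :=
    Set.Icc_subset_Icc le_rfl (by norm_num)
  have hWc : ContinuousOn W (Set.Icc 0 (1/2)) := (hW.continuousOn).mono hsub
  have hmaps : ∀ x ∈ Set.Icc (0:ℝ) (1/2), W x ∈ Set.Icc 0 ξ := by
    intro x hx
    have hmono' := hmono.monotoneOn
    constructor
    · have := hmono' (Set.left_mem_Icc.2 (by norm_num)) hx hx.1
      rwa [h0] at this
    · have := hmono' hx (Set.right_mem_Icc.2 (by norm_num)) hx.2
      rwa [hxi] at this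
  -- right derivatives
  have derivF : ∀ y ∈ Set.Ico (0:ℝ) (1/2),
      HasDerivWithinAt (fun t => ∫ x in (0:ℝ)..t, W x) (W y) (Set.Ici y) y := by
    intro y hy
    have hmem : Set.Icc (0:ℝ) 1 ∈ nhdsWithin y (Set.Ioi y) := by
      rw [mem_nhdsWithin]
      refine ⟨Set.Iio 1, isOpen_Iio, Set.mem_Iio.2 (by linarith [hy.2]), ?_⟩
      rintro z ⟨hz1, hz2⟩
      exact ⟨le_trans hy.1 (le_of_lt hz2), le_of_lt hz1⟩
    have hint : IntervalIntegrable W volume 0 y := by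
      apply ContinuousOn.intervalIntegrable
      apply hW.continuousOn.mono
      rw [Set.uIcc_of_le hy.1]
      exact Set.Icc_subset_Icc le_rfl (by linarith [hy.2])
    refine intervalIntegral.integral_hasDerivWithinAt_right hint
      ⟨Set.Icc 0 1, hmem, (hW.continuousOn.aestronglyMeasurable measurableSet_Icc)⟩ ?_
    exact (hW.continuousOn y ⟨hy.1, by linarith [hy.2]⟩).mono_of_mem_nhdsWithin hmem
  have derivG : ∀ y ∈ Set.Ico (0:ℝ) (1/2),
      HasDerivWithinAt (fun t => Φ (W t)) (W y) (Set.Ici y) y := by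
    intro y hy
    have h0Wy : 0 ≤ W y := by
      rcases eq_or_lt_of_le hy.1 with h | h
      · rw [← h, h0]
      · have := hmono (Set.left_mem_Icc.2 (by norm_num)) ⟨hy.1, hy.2.le⟩ h
        rw [h0] at this; exact this.le
    have hWylt : W y < ξ := by
      have := hmono ⟨hy.1, hy.2.le⟩ (Set.right_mem_Icc.2 (by norm_num)) hy.2
      rwa [hxi] at this
    have hDpos : 0 < (2/(p+1)) * (ξ ^ (p+1) - W y ^ (p+1)) := by
      have := Real.rpow_lt_rpow h0Wy hWylt hp1
      have h2 : 0 < ξ ^ (p+1) - W y ^ (p+1) := by linarith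
      positivity
    have hSpos : 0 < Real.sqrt ((2/(p+1)) * (ξ ^ (p+1) - W y ^ (p+1))) :=
      Real.sqrt_pos.2 hDpos
    have hdy := hd y hy
    have hdiff : DifferentiableAt ℝ W y := by
      apply differentiableAt_of_deriv_ne_zero
      rw [hdy]; exact ne_of_gt hSpos
    have hW' : HasDerivAt W (Real.sqrt ((2/(p+1)) * (ξ ^ (p+1) - W y ^ (p+1)))) y := by
      rw [← hdy]; exact hdiff.hasDerivAt
    have hcontg : ContinuousAt g (W y) :=
      ContinuousAt.div continuousAt_id hden_cont.continuousAt (ne_of_gt hSpos)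
    have hintg : IntervalIntegrable g volume 0 (W y) := by
      apply hIg.mono_set
      apply Set.uIcc_subset_uIcc
      · rw [Set.uIcc_of_le hξ.le]; exact ⟨le_rfl, hξ.le⟩
      · rw [Set.uIcc_of_le hξ.le]; exact ⟨h0Wy, hWylt.le⟩
    have hΦ' : HasDerivAt Φ (g (W y)) (W y) :=
      intervalIntegral.integral_hasDerivAt_right hintg
        (hgmeas.stronglyMeasurable.stronglyMeasurableAtFilter) hcontg
    have hcomp := HasDerivAt.comp_hasDerivWithinAt y hΦ' (hW'.hasDerivWithinAt (s := Set.Ici y))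
    have hval : g (W y) * Real.sqrt ((2/(p+1)) * (ξ ^ (p+1) - W y ^ (p+1))) = W y :=
      div_mul_cancel₀ _ (ne_of_gt hSpos)
    rw [hval] at hcomp
    exact hcomp
  -- continuity of the two sides
  have Fcont : ContinuousOn (fun t => ∫ x in (0:ℝ)..t, W x) (Set.Icc 0 (1/2)) := by
    have : IntegrableOn W (Set.uIcc 0 (1/2)) volume := by
      rw [Set.uIcc_of_le (by norm_num : (0:ℝ) ≤ 1/2)]
      exact hWc.integrableOn_Icc
    have := intervalIntegral.continuousOn_primitive_interval this
    rwa [Set.uIcc_of_le (by norm_num : (0:ℝ) ≤ 1/2)] at this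
  have Φcont : ContinuousOn Φ (Set.Icc 0 ξ) := by
    have : IntegrableOn g (Set.uIcc 0 ξ) volume := by
      rw [Set.uIcc_of_le hξ.le]
      exact (intervalIntegrable_iff_integrableOn_Icc_of_le hξ.le).1 hIg
    have := intervalIntegral.continuousOn_primitive_interval this
    rwa [Set.uIcc_of_le hξ.le] at this
  have Gcont : ContinuousOn (fun t => Φ (W t)) (Set.Icc 0 (1/2)) :=
    Φcont.comp hWc hmaps
  -- the key identity
  have key := eq_of_has_deriv_right_eq derivF derivG Fcont Gcont
    (by simp [Φ, h0, intervalIntegral.integral_same])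
  have hmain : ∫ x in (0:ℝ)..(1/2), W x = ∫ u in (0:ℝ)..ξ, g u := by
    have := key (1/2) (Set.right_mem_Icc.2 (by norm_num))
    rw [this, hxi]
  rw [hmain]
  -- evaluate ∫₀^ξ g via scaling
  have hEq' : Set.EqOn g (fun u => A * h (u / ξ)) (Set.uIcc 0 ξ) := by
    rw [Set.uIcc_of_le hξ.le]; exact hEq
  rw [intervalIntegral.integral_congr hEq', intervalIntegral.integral_const_mul,
    intervalIntegral.integral_comp_div (c := ξ) h hξ.ne', zero_div, div_self hξ.ne',
    smul_eq_mul]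
  -- final constant computation
  have hAξ : A * ξ = Real.sqrt ((p+1)/2) * ξ ^ ((3 - p)/2) := by
    have hBE : Real.sqrt ((p+1)/2) * B = 1 := by
      rw [hB, ← Real.sqrt_mul (by positivity)]
      have : (p+1)/2 * (2/(p+1)) = 1 := by field_simp
      rw [this, Real.sqrt_one]
    have hErw : E = ξ ^ ((p+1)/2) := by
      rw [hE, Real.sqrt_eq_rpow, ← Real.rpow_mul hξ.le]
      ring_nf
    have hpow : ξ ^ ((3 - p)/2) * ξ ^ ((p+1)/2) = ξ * ξ := by
      rw [← Real.rpow_add hξ]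
      have : (3 - p)/2 + (p+1)/2 = 2 := by ring
      rw [this, Real.rpow_two, sq]
    rw [hA, div_mul_eq_mul_div, div_eq_iff (by positivity : B * E ≠ 0)]
    calc ξ * ξ = ξ ^ ((3 - p)/2) * ξ ^ ((p+1)/2) := hpow.symm
      _ = (Real.sqrt ((p+1)/2) * B) * (ξ ^ ((3 - p)/2) * ξ ^ ((p+1)/2)) := by
          rw [hBE, one_mul]
      _ = Real.sqrt ((p+1)/2) * ξ ^ ((3 - p)/2) * (B * E) := by
          rw [hErw]; ring
  calc A * (ξ * ∫ s in (0:ℝ)..1, h s) = (A * ξ) * ∫ s in (0:ℝ)..1, h s := by ring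
    _ = Real.sqrt ((p+1)/2) * ξ ^ ((3 - p)/2) * ∫ s in (0:ℝ)..1, h s := by rw [hAξ]
end
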